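/- Every minimally (n−6)-factor-critical graph G of order n ≥ 8 has minimum degree exactly n − 5. -/

import Mathlib

open SimpleGraph

variable {V : Type*}

/-- `G` has a perfect matching covering exactly the vertex set `A`
(i.e. the graph obtained from `G` by deleting the vertices outside `A` has a perfect matching). -/
def HasPMOn (G : SimpleGraph V) (A : Set V) : Prop :=
  ∃ M : G.Subgraph, M.verts = A ∧ M.IsMatching

/-- `G` is `k`-factor-critical: deleting any `k` vertices leaves a graph with a perfect matching. -/
def FactorCritical [Fintype V] (G : SimpleGraph V) (k : ℕ) : Prop :=
  ∀ S : Finset V, S.card = k → HasPMOn G ((↑S : Set V)ᶜ)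

/-- `G` is minimally `k`-factor-critical. -/
def MinFactorCritical [Fintype V] (G : SimpleGraph V) (k : ℕ) : Prop :=
  FactorCritical G k ∧ ∀ u v : V, G.Adj u v → ¬ FactorCritical (G.deleteEdges {s(u,v)}) k

/-- The number of odd connected components of a graph. -/
noncomputable def oddComponents {W : Type*} (G : SimpleGraph W) : ℕ :=
  Nat.card {c : G.ConnectedComponent // Odd (Nat.card c.supp)}

namespace MFC

/-- complement adjacency -/
def Bar (G : SimpleGraph V) (x y : V) : Prop := x ≠ y ∧ ¬ G.Adj x y

lemma Bar.symm {G : SimpleGraph V} {x y : V} (h : Bar G x y) : Bar G y x :=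
  ⟨h.1.symm, fun ha => h.2 ha.symm⟩

def PBad (G : SimpleGraph V) (u v : V) : Prop :=
  (∃ s t, s ≠ t ∧ Bar G u s ∧ Bar G u t ∧ Bar G v s ∧ Bar G v t ∧ Bar G s t) ∨
  (∃ s t w, s ≠ t ∧ s ≠ w ∧ t ≠ w ∧ Bar G u s ∧ Bar G u t ∧ Bar G u w ∧
    Bar G v s ∧ Bar G v t ∧ Bar G v w) ∨
  (∃ x y s t, x ≠ y ∧ x ≠ s ∧ x ≠ t ∧ y ≠ s ∧ y ≠ t ∧ s ≠ t ∧
    Bar G u x ∧ Bar G u y ∧ Bar G v s ∧ Bar G v t ∧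
    Bar G x s ∧ Bar G x t ∧ Bar G y s ∧ Bar G y t)

lemma delAdj {G : SimpleGraph V} {u v a b : V} (h : G.Adj a b)
    (h1 : ¬(a = u ∧ b = v)) (h2 : ¬(a = v ∧ b = u)) :
    (G.deleteEdges {s(u,v)}).Adj a b := by
  rw [SimpleGraph.deleteEdges_adj]
  refine ⟨h, ?_⟩
  simp only [Set.mem_singleton_iff, Sym2.eq_iff]
  tauto

variable [Fintype V] [DecidableEq V] {G : SimpleGraph V} [DecidableRel G.Adj]

lemma H4 (hn8 : 8 ≤ Fintype.card V)
    (hdeg : ∀ w, Fintype.card V - 4 ≤ G.degree w) {x a b c d : V}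
    (hab : a ≠ b) (hac : a ≠ c) (had : a ≠ d) (hbc : b ≠ c) (hbd : b ≠ d) (hcd : c ≠ d)
    (ha : Bar G x a) (hb : Bar G x b) (hc : Bar G x c) (hd : Bar G x d) : False := by
  have hsub : ({a, b, c, d} : Finset V) ⊆ (insert x (G.neighborFinset x))ᶜ := by
    intro z hz
    simp only [Finset.mem_insert, Finset.mem_singleton] at hz
    simp only [Finset.mem_compl, Finset.mem_insert, mem_neighborFinset]
    rcases hz with rfl | rfl | rfl | rfl
    · exact fun h => h.elim (fun h => ha.1 h.symm) ha.2
    · exact fun h => h.elim (fun h => hb.1 h.symm) hb.2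
    · exact fun h => h.elim (fun h => hc.1 h.symm) hc.2
    · exact fun h => h.elim (fun h => hd.1 h.symm) hd.2
  have hcard4 : ({a, b, c, d} : Finset V).card = 4 := by
    rw [Finset.card_insert_of_notMem (by simp [hab, hac, had]),
      Finset.card_insert_of_notMem (by simp [hbc, hbd]),
      Finset.card_insert_of_notMem (by simp [hcd]), Finset.card_singleton]
  have hle := Finset.card_le_card hsub
  rw [hcard4, Finset.card_compl] at hle
  have hxn : x ∉ G.neighborFinset x := by simp
  have hins : (insert x (G.neighborFinset x)).card = G.degree x + 1 := by
    rw [Finset.card_insert_of_notMem hxn]; rfl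
  rw [hins] at hle
  have := hdeg x
  have hdle : G.degree x ≤ Fintype.card V - 1 := by
    have := Finset.card_le_card (Finset.subset_univ (G.neighborFinset x))
    simp only [Finset.card_univ] at this
    omega
  omega

lemma H3 (hn8 : 8 ≤ Fintype.card V)
    (hdeg : ∀ w, Fintype.card V - 4 ≤ G.degree w) {x a b c z : V}
    (hab : a ≠ b) (hac : a ≠ c) (hbc : b ≠ c)
    (ha : Bar G x a) (hb : Bar G x b) (hc : Bar G x c) (hz : Bar G x z) :
    z = a ∨ z = b ∨ z = c := by
  by_contra h
  push_neg at h
  exact H4 hn8 hdeg hab hac h.1.symm hbc h.2.1.symm h.2.2.symm ha hb hc hz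

lemma degree_lower (hn8 : 8 ≤ Fintype.card V)
    (hfc : FactorCritical G (Fintype.card V - 6)) (v : V) :
    Fintype.card V - 5 ≤ G.degree v := by
  by_contra hlt
  push_neg at hlt
  -- v has at least 5 non-neighbors
  have hcardc : 5 ≤ ((insert v (G.neighborFinset v))ᶜ : Finset V).card := by
    rw [Finset.card_compl, Finset.card_insert_of_notMem (by simp)]
    have : (G.neighborFinset v).card = G.degree v := rfl
    omega
  obtain ⟨W, hWsub, hW5⟩ := Finset.exists_subset_card_eq hcardc
  have hvW : v ∉ W := fun h => by
    have := hWsub h; simp at this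
  have hcardS : ((insert v W)ᶜ : Finset V).card = Fintype.card V - 6 := by
    rw [Finset.card_compl, Finset.card_insert_of_notMem hvW, hW5]
  obtain ⟨M, hMv, hMm⟩ := hfc _ hcardS
  have hvv : v ∈ M.verts := by
    rw [hMv]
    simp only [Set.mem_compl_iff, Finset.coe_compl, Finset.mem_coe]
    simp
  obtain ⟨w, hw, -⟩ := hMm hvv
  have hwM : w ∈ M.verts := M.edge_vert hw.symm
  rw [hMv] at hwM
  simp only [Finset.coe_compl, Set.mem_compl_iff, Finset.mem_coe, Finset.mem_compl,
    not_not] at hwM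
  have hadj : G.Adj v w := hw.adj_sub
  rcases Finset.mem_insert.mp hwM with rfl | hwW
  · exact G.loopless.irrefl _ hadj
  · have := hWsub hwW
    simp only [Finset.mem_compl, Finset.mem_insert, mem_neighborFinset] at this
    exact this (Or.inr hadj)


lemma P3aux {α : Type*} {x y v s' t' w' : α} (h1 : s' ≠ t') (h2 : s' ≠ w') (h3 : t' ≠ w')
    (hs : s' = x ∨ s' = y ∨ s' = v) (ht : t' = x ∨ t' = y ∨ t' = v)
    (hw : w' = x ∨ w' = y ∨ w' = v) : v = s' ∨ v = t' ∨ v = w' := by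
  rcases hs with rfl | rfl | rfl <;> rcases ht with rfl | rfl | rfl <;>
    rcases hw with rfl | rfl | rfl <;> tauto

section
variable {G : SimpleGraph V}
variable (H4 : ∀ {x a b c d : V},
    a ≠ b → a ≠ c → a ≠ d → b ≠ c → b ≠ d → c ≠ d →
    Bar G x a → Bar G x b → Bar G x c → Bar G x d → False)
  (H3 : ∀ {x a b c z : V}, a ≠ b → a ≠ c → b ≠ c →
    Bar G x a → Bar G x b → Bar G x c → Bar G x z → z = a ∨ z = b ∨ z = c)

include H4 H3

lemma killerI {u v s t : V} (hadj : G.Adj u v) (hst : s ≠ t)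
    (hus : Bar G u s) (hut : Bar G u t) (hvs : Bar G v s) (hvt : Bar G v t)
    (hbst : Bar G s t) :
    ∀ v', G.Adj u v' → v' ≠ v → ¬ PBad G u v' := by
  have huv : u ≠ v := G.ne_of_adj hadj
  have hS3 : ∀ z, Bar G s z → z = u ∨ z = t ∨ z = v := fun z hz =>
    H3 hut.1 huv hvt.1.symm hus.symm hbst hvs.symm hz
  have hT3 : ∀ z, Bar G t z → z = u ∨ z = s ∨ z = v := fun z hz =>
    H3 hus.1 huv hvs.1.symm hut.symm hbst.symm hvt.symm hz
  intro v' hadj' hne hP'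
  have hW : ∀ q, (q = s ∨ q = t) → Bar G v' q → False := by
    intro q hq hbq
    rcases hq with rfl | rfl
    · rcases hS3 v' hbq.symm with h | h | h
      · exact G.loopless.irrefl u (h ▸ hadj')
      · exact hut.2 (by rw [← h]; exact hadj')
      · exact hne h
    · rcases hT3 v' hbq.symm with h | h | h
      · exact G.loopless.irrefl u (h ▸ hadj')
      · exact hus.2 (by rw [← h]; exact hadj')
      · exact hne h
  rcases hP' with ⟨s', t', hst', hus', hut', hvs', hvt', hbst'⟩ |
    ⟨s', t', w', h1, h2, h3, hus', hut', huw', hvs', hvt', hvw'⟩ |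
    ⟨x', y', s', t', hxy', hxs', hxt', hys', hyt', hst', hux', huy', hvs', hvt',
      hbxs', hbxt', hbys', hbyt'⟩
  · have hs1 : s' ≠ s := fun h => hW s (Or.inl rfl) (h ▸ hvs')
    have hs2 : s' ≠ t := fun h => hW t (Or.inr rfl) (h ▸ hvs')
    have ht1 : t' ≠ s := fun h => hW s (Or.inl rfl) (h ▸ hvt')
    have ht2 : t' ≠ t := fun h => hW t (Or.inr rfl) (h ▸ hvt')
    exact H4 hst' hs1 hs2 ht1 ht2 hst hus' hut' hus hut
  · by_cases hq : s' = s ∨ s' = t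
    · exact hW s' hq hvs'
    by_cases hq' : t' = s ∨ t' = t
    · exact hW t' hq' hvt'
    by_cases hq'' : w' = s ∨ w' = t
    · exact hW w' hq'' hvw'
    push_neg at hq hq' hq''
    exact H4 h1 hq.1 hq.2 hq'.1 hq'.2 hst hus' hut' hus hut
  · have KB : ∀ p q1 q2, (p = s ∨ p = t) → q1 ≠ q2 → Bar G v' q1 → Bar G v' q2 →
        Bar G p q1 → Bar G p q2 → False := by
      intro p q1 q2 hp hq12 hv1 hv2 hp1 hp2
      rcases hp with rfl | rfl
      · rcases hS3 q1 hp1 with h | h | h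
        · exact hv1.2 (by rw [h]; exact hadj'.symm)
        · exact hW q1 (Or.inr h) hv1
        · rcases hS3 q2 hp2 with h' | h' | h'
          · exact hv2.2 (by rw [h']; exact hadj'.symm)
          · exact hW q2 (Or.inr h') hv2
          · exact hq12 (h.trans h'.symm)
      · rcases hT3 q1 hp1 with h | h | h
        · exact hv1.2 (by rw [h]; exact hadj'.symm)
        · exact hW q1 (Or.inl h) hv1
        · rcases hT3 q2 hp2 with h' | h' | h'
          · exact hv2.2 (by rw [h']; exact hadj'.symm)
          · exact hW q2 (Or.inl h') hv2
          · exact hq12 (h.trans h'.symm)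
    by_cases hx : x' = s ∨ x' = t
    · exact KB x' s' t' hx hst' hvs' hvt' hbxs' hbxt'
    by_cases hy : y' = s ∨ y' = t
    · exact KB y' s' t' hy hst' hvs' hvt' hbys' hbyt'
    push_neg at hx hy
    exact H4 hxy' hx.1 hx.2 hy.1 hy.2 hst hux' huy' hus hut

lemma killerIII {u v x y s t : V} (hadj : G.Adj u v)
    (hxy : x ≠ y) (hxs : x ≠ s) (hxt : x ≠ t) (hys : y ≠ s) (hyt : y ≠ t) (hst : s ≠ t)
    (hux : Bar G u x) (huy : Bar G u y) (hvs : Bar G v s) (hvt : Bar G v t)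
    (hbxs : Bar G x s) (hbxt : Bar G x t) (hbys : Bar G y s) (hbyt : Bar G y t) :
    ∀ v', G.Adj u v' → v' ≠ v → ¬ PBad G u v' := by
  have hsu : s ≠ u := fun h => hvs.2 (h ▸ hadj.symm)
  have htu : t ≠ u := fun h => hvt.2 (h ▸ hadj.symm)
  have hxv : x ≠ v := fun h => hux.2 (h ▸ hadj)
  have hyv : y ≠ v := fun h => huy.2 (h ▸ hadj)
  have hX3 : ∀ z, Bar G x z → z = u ∨ z = s ∨ z = t := fun z hz =>
    H3 hsu.symm htu.symm hst hux.symm hbxs hbxt hz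
  have hY3 : ∀ z, Bar G y z → z = u ∨ z = s ∨ z = t := fun z hz =>
    H3 hsu.symm htu.symm hst huy.symm hbys hbyt hz
  have hS3 : ∀ z, Bar G s z → z = x ∨ z = y ∨ z = v := fun z hz =>
    H3 hxy hxv hyv hbxs.symm hbys.symm hvs.symm hz
  have hT3 : ∀ z, Bar G t z → z = x ∨ z = y ∨ z = v := fun z hz =>
    H3 hxy hxv hyv hbxt.symm hbyt.symm hvt.symm hz
  have hxynot : ¬ Bar G x y := by
    intro hb
    rcases hX3 y hb with h | h | h
    · exact huy.1 h.symm
    · exact hys h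
    · exact hyt h
  intro v' hadj' hne hP'
  have hvx' : v' ≠ x := fun h => hux.2 (h ▸ hadj')
  have hvy' : v' ≠ y := fun h => huy.2 (h ▸ hadj')
  have KC : ∀ q, (q = s ∨ q = t) → Bar G v' q → False := by
    intro q hq hbq
    rcases hq with rfl | rfl
    · rcases hS3 v' hbq.symm with h | h | h
      · exact hvx' h
      · exact hvy' h
      · exact hne h
    · rcases hT3 v' hbq.symm with h | h | h
      · exact hvx' h
      · exact hvy' h
      · exact hne h
  rcases hP' with ⟨s', t', hst', hus', hut', hvs', hvt', hbst'⟩ |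
    ⟨s', t', w', h1, h2, h3, hus', hut', huw', hvs', hvt', hvw'⟩ |
    ⟨x', y', s', t', hxy', hxs', hxt', hys', hyt', hst'', hux', huy', hvs', hvt',
      hbxs', hbxt', hbys', hbyt'⟩
  · -- case (i)
    have KB : ∀ p q, (p = x ∨ p = y) → q ≠ p → Bar G u q → Bar G v' p → Bar G v' q →
        Bar G p q → False := by
      intro p q hpxy hqp huq hvp hvq hpq
      rcases hpxy with rfl | rfl
      · rcases hX3 v' hvp.symm with h | h | h
        · exact G.loopless.irrefl u (h ▸ hadj')
        · have hsq : Bar G s q := by rw [← h]; exact hvq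
          rcases hS3 q hsq with h2 | h2 | h2
          · exact hqp h2
          · exact hxynot (by rw [← h2]; exact hpq)
          · exact huq.2 (by rw [h2]; exact hadj)
        · have htq : Bar G t q := by rw [← h]; exact hvq
          rcases hT3 q htq with h2 | h2 | h2
          · exact hqp h2
          · exact hxynot (by rw [← h2]; exact hpq)
          · exact huq.2 (by rw [h2]; exact hadj)
      · rcases hY3 v' hvp.symm with h | h | h
        · exact G.loopless.irrefl u (h ▸ hadj')
        · have hsq : Bar G s q := by rw [← h]; exact hvq
          rcases hS3 q hsq with h2 | h2 | h2
          · exact hxynot (Bar.symm (by rw [← h2]; exact hpq))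
          · exact hqp h2
          · exact huq.2 (by rw [h2]; exact hadj)
        · have htq : Bar G t q := by rw [← h]; exact hvq
          rcases hT3 q htq with h2 | h2 | h2
          · exact hxynot (Bar.symm (by rw [← h2]; exact hpq))
          · exact hqp h2
          · exact huq.2 (by rw [h2]; exact hadj)
    by_cases hs : s' = x ∨ s' = y
    · exact KB s' t' hs (Ne.symm hst') hut' hvs' hvt' hbst'
    by_cases ht : t' = x ∨ t' = y
    · exact KB t' s' ht hst' hus' hvt' hvs' hbst'.symm
    push_neg at hs ht
    exact H4 hst' hs.1 hs.2 ht.1 ht.2 hxy hus' hut' hux huy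
  · -- case (ii)
    have hvxy : Bar G v' x ∧ Bar G v' y := by
      by_cases hs : s' = x ∨ s' = y
      · by_cases ht : t' = x ∨ t' = y
        · rcases hs with rfl | rfl <;> rcases ht with rfl | rfl
          · exact absurd rfl h1
          · exact ⟨hvs', hvt'⟩
          · exact ⟨hvt', hvs'⟩
          · exact absurd rfl h1
        · by_cases hw : w' = x ∨ w' = y
          · rcases hs with rfl | rfl <;> rcases hw with rfl | rfl
            · exact absurd rfl h2
            · exact ⟨hvs', hvw'⟩
            · exact ⟨hvw', hvs'⟩
            · exact absurd rfl h2
          · push_neg at ht hw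
            exact absurd (H4 h3 ht.1 ht.2 hw.1 hw.2 hxy hut' huw' hux huy) not_false
      · by_cases ht : t' = x ∨ t' = y
        · by_cases hw : w' = x ∨ w' = y
          · rcases ht with rfl | rfl <;> rcases hw with rfl | rfl
            · exact absurd rfl h3
            · exact ⟨hvt', hvw'⟩
            · exact ⟨hvw', hvt'⟩
            · exact absurd rfl h3
          · push_neg at hs hw
            exact absurd (H4 h2 hs.1 hs.2 hw.1 hw.2 hxy hus' huw' hux huy) not_false
        · push_neg at hs ht
          exact absurd (H4 h1 hs.1 hs.2 ht.1 ht.2 hxy hus' hut' hux huy) not_false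
    rcases hX3 v' hvxy.1.symm with h | h | h
    · exact G.loopless.irrefl u (h ▸ hadj')
    · -- v' = s
      have hs' := hS3 s' (by rw [← h]; exact hvs')
      have ht' := hS3 t' (by rw [← h]; exact hvt')
      have hw' := hS3 w' (by rw [← h]; exact hvw')
      rcases P3aux h1 h2 h3 hs' ht' hw' with h4 | h4 | h4
      · exact hus'.2 (by rw [← h4]; exact hadj)
      · exact hut'.2 (by rw [← h4]; exact hadj)
      · exact huw'.2 (by rw [← h4]; exact hadj)
    · have hs' := hT3 s' (by rw [← h]; exact hvs')
      have ht' := hT3 t' (by rw [← h]; exact hvt')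
      have hw' := hT3 w' (by rw [← h]; exact hvw')
      rcases P3aux h1 h2 h3 hs' ht' hw' with h4 | h4 | h4
      · exact hus'.2 (by rw [← h4]; exact hadj)
      · exact hut'.2 (by rw [← h4]; exact hadj)
      · exact huw'.2 (by rw [← h4]; exact hadj)
  · -- case (iii)
    have KD : ∀ p, (p = x ∨ p = y) → Bar G p s' → False := by
      intro p hp hps'
      have hs'u : s' ≠ u := fun h => hvs'.2 (h ▸ hadj'.symm)
      rcases hp with rfl | rfl
      · rcases hX3 s' hps' with h | h | h
        · exact hs'u h
        · exact KC s' (Or.inl h) hvs'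
        · exact KC s' (Or.inr h) hvs'
      · rcases hY3 s' hps' with h | h | h
        · exact hs'u h
        · exact KC s' (Or.inl h) hvs'
        · exact KC s' (Or.inr h) hvs'
    by_cases hx' : x' = x ∨ x' = y
    · exact KD x' hx' hbxs'
    by_cases hy' : y' = x ∨ y' = y
    · exact KD y' hy' hbys'
    push_neg at hx' hy'
    exact H4 hxy' hx'.1 hx'.2 hy'.1 hy'.2 hxy hux' huy' hux huy

lemma allII {u v1 v2 v3 : V} (h12 : v1 ≠ v2) (h13 : v1 ≠ v3) (h23 : v2 ≠ v3)
    (ha1 : G.Adj u v1) (ha2 : G.Adj u v2) (ha3 : G.Adj u v3)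
    {s1 s2 t2 w2 s3 t3 w3 : V}
    (hu1 : Bar G u s1)
    (hv1 : Bar G v1 s1)
    (d2 : s2 ≠ t2) (d2' : s2 ≠ w2) (d2'' : t2 ≠ w2)
    (hu2 : Bar G u s2) (hu2' : Bar G u t2) (hu2'' : Bar G u w2)
    (hv2 : Bar G v2 s2) (hv2' : Bar G v2 t2) (hv2'' : Bar G v2 w2)
    (d3 : s3 ≠ t3) (d3' : s3 ≠ w3) (d3'' : t3 ≠ w3)
    (hu3 : Bar G u s3) (hu3' : Bar G u t3) (hu3'' : Bar G u w3)
    (hv3 : Bar G v3 s3) (hv3' : Bar G v3 t3) (hv3'' : Bar G v3 w3) : False := by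
  have hb2 : Bar G v2 s1 := by
    rcases H3 d2 d2' d2'' hu2 hu2' hu2'' hu1 with h | h | h
    · rw [h]; exact hv2
    · rw [h]; exact hv2'
    · rw [h]; exact hv2''
  have hb3 : Bar G v3 s1 := by
    rcases H3 d3 d3' d3'' hu3 hu3' hu3'' hu1 with h | h | h
    · rw [h]; exact hv3
    · rw [h]; exact hv3'
    · rw [h]; exact hv3''
  exact H4 (G.ne_of_adj ha1) (G.ne_of_adj ha2) (G.ne_of_adj ha3) h12 h13 h23
    hu1.symm hv1.symm hb2.symm hb3.symm

lemma CNT {u v1 v2 v3 : V} (h12 : v1 ≠ v2) (h13 : v1 ≠ v3) (h23 : v2 ≠ v3)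
    (ha1 : G.Adj u v1) (ha2 : G.Adj u v2) (ha3 : G.Adj u v3)
    (hp1 : PBad G u v1) (hp2 : PBad G u v2) (hp3 : PBad G u v3) : False := by
  have hq1 := hp1
  have hq2 := hp2
  have hq3 := hp3
  rcases hp1 with h1 | h1 | h1
  · obtain ⟨s, t, hst, b1, b2, b3, b4, b5⟩ := h1
    exact killerI H4 H3 ha1 hst b1 b2 b3 b4 b5 v2 ha2 h12.symm hq2
  · rcases hp2 with h2 | h2 | h2
    · obtain ⟨s, t, hst, b1, b2, b3, b4, b5⟩ := h2
      exact killerI H4 H3 ha2 hst b1 b2 b3 b4 b5 v1 ha1 h12 hq1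
    · rcases hp3 with h3 | h3 | h3
      · obtain ⟨s, t, hst, b1, b2, b3, b4, b5⟩ := h3
        exact killerI H4 H3 ha3 hst b1 b2 b3 b4 b5 v1 ha1 h13 hq1
      · obtain ⟨s1, t1, w1, d1, d1', d1'', hu1, hu1', hu1'', hv1, hv1', hv1''⟩ := h1
        obtain ⟨s2, t2, w2, d2, d2', d2'', hu2, hu2', hu2'', hv2, hv2', hv2''⟩ := h2
        obtain ⟨s3, t3, w3, d3, d3', d3'', hu3, hu3', hu3'', hv3, hv3', hv3''⟩ := h3
        exact allII H4 H3 h12 h13 h23 ha1 ha2 ha3 hu1 hv1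
          d2 d2' d2'' hu2 hu2' hu2'' hv2 hv2' hv2'' d3 d3' d3'' hu3 hu3' hu3'' hv3 hv3' hv3''
      · obtain ⟨x, y, s, t, e1, e2, e3, e4, e5, e6, b1, b2, b3, b4, b5, b6, b7, b8⟩ := h3
        exact killerIII H4 H3 ha3 e1 e2 e3 e4 e5 e6 b1 b2 b3 b4 b5 b6 b7 b8 v1 ha1 h13 hq1
    · obtain ⟨x, y, s, t, e1, e2, e3, e4, e5, e6, b1, b2, b3, b4, b5, b6, b7, b8⟩ := h2
      exact killerIII H4 H3 ha2 e1 e2 e3 e4 e5 e6 b1 b2 b3 b4 b5 b6 b7 b8 v1 ha1 h12 hq1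
  · obtain ⟨x, y, s, t, e1, e2, e3, e4, e5, e6, b1, b2, b3, b4, b5, b6, b7, b8⟩ := h1
    exact killerIII H4 H3 ha1 e1 e2 e3 e4 e5 e6 b1 b2 b3 b4 b5 b6 b7 b8 v2 ha2 h12.symm hq2

end

lemma support_sup' {G : SimpleGraph V} (B C : G.Subgraph) :
    (B ⊔ C).support = B.support ∪ C.support := by
  ext w
  simp [Subgraph.mem_support, Subgraph.sup_adj, exists_or]

lemma buildPM {G' : SimpleGraph V} {x1 x2 x3 x4 x5 x6 : V} {A : Set V}
    (h12 : G'.Adj x1 x2) (h34 : G'.Adj x3 x4) (h56 : G'.Adj x5 x6)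
    (d13 : x1 ≠ x3) (d14 : x1 ≠ x4) (d15 : x1 ≠ x5) (d16 : x1 ≠ x6)
    (d23 : x2 ≠ x3) (d24 : x2 ≠ x4) (d25 : x2 ≠ x5) (d26 : x2 ≠ x6)
    (d35 : x3 ≠ x5) (d36 : x3 ≠ x6) (d45 : x4 ≠ x5) (d46 : x4 ≠ x6)
    (hA : A = {x1, x2, x3, x4, x5, x6}) : HasPMOn G' A := by
  refine ⟨G'.subgraphOfAdj h12 ⊔ (G'.subgraphOfAdj h34 ⊔ G'.subgraphOfAdj h56), ?_, ?_⟩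
  · rw [hA]
    simp only [Subgraph.verts_sup, subgraphOfAdj_verts]
    ext z
    simp only [Set.mem_union, Set.mem_insert_iff, Set.mem_singleton_iff]
    tauto
  · have hd1 : Disjoint (G'.subgraphOfAdj h34).support (G'.subgraphOfAdj h56).support := by
      simp only [support_subgraphOfAdj]
      rw [Set.disjoint_iff_inter_eq_empty]
      ext z
      simp only [Set.mem_inter_iff, Set.mem_insert_iff, Set.mem_singleton_iff,
        Set.mem_empty_iff_false, iff_false]
      rintro ⟨h | h, h' | h'⟩ <;> subst h <;>
        first | exact d35 h' | exact d36 h' | exact d45 h' | exact d46 h'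
    have hd2 : Disjoint (G'.subgraphOfAdj h12).support
        (G'.subgraphOfAdj h34 ⊔ G'.subgraphOfAdj h56).support := by
      rw [support_sup']
      simp only [support_subgraphOfAdj]
      rw [Set.disjoint_iff_inter_eq_empty]
      ext z
      simp only [Set.mem_inter_iff, Set.mem_union, Set.mem_insert_iff, Set.mem_singleton_iff,
        Set.mem_empty_iff_false, iff_false]
      rintro ⟨h | h, (h' | h') | (h' | h')⟩ <;> subst h <;>
        first | exact d13 h' | exact d14 h' | exact d15 h' | exact d16 h' |
          exact d23 h' | exact d24 h' | exact d25 h' | exact d26 h'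
    exact (Subgraph.IsMatching.subgraphOfAdj h12).sup
      ((Subgraph.IsMatching.subgraphOfAdj h34).sup
        (Subgraph.IsMatching.subgraphOfAdj h56) hd1) hd2

lemma transferPM {G : SimpleGraph V} {u v : V} {A : Set V} (M : G.Subgraph)
    (hMv : M.verts = A) (hMm : M.IsMatching) (hnadj : ¬ M.Adj u v) :
    HasPMOn (G.deleteEdges {s(u,v)}) A := by
  refine ⟨⟨M.verts, M.Adj, fun {a b} h => ?_, fun {a b} h => M.edge_vert h,
    M.symm⟩, hMv, fun w hw => hMm hw⟩
  rw [SimpleGraph.deleteEdges_adj]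
  refine ⟨M.adj_sub h, ?_⟩
  simp only [Set.mem_singleton_iff, Sym2.eq_iff]
  rintro (⟨rfl, rfl⟩ | ⟨rfl, rfl⟩)
  · exact hnadj h
  · exact hnadj h.symm

lemma six_decomp [DecidableEq V] {T : Finset V} (h6 : T.card = 6) {u v : V}
    (hu : u ∈ T) (hv : v ∈ T) (huv : u ≠ v) :
    ∃ a b c d : V, a ≠ b ∧ a ≠ c ∧ a ≠ d ∧ b ≠ c ∧ b ≠ d ∧ c ≠ d ∧
      u ≠ a ∧ u ≠ b ∧ u ≠ c ∧ u ≠ d ∧ v ≠ a ∧ v ≠ b ∧ v ≠ c ∧ v ≠ d ∧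
      (↑T : Set V) = {u, v, a, b, c, d} := by
  have h5 : (T.erase u).card = 5 := by rw [Finset.card_erase_of_mem hu, h6]
  have hv5 : v ∈ T.erase u := Finset.mem_erase.mpr ⟨huv.symm, hv⟩
  have h4 : ((T.erase u).erase v).card = 4 := by rw [Finset.card_erase_of_mem hv5, h5]
  obtain ⟨a, ha⟩ : ((T.erase u).erase v).Nonempty := Finset.card_pos.mp (by omega)
  have h3 : (((T.erase u).erase v).erase a).card = 3 := by rw [Finset.card_erase_of_mem ha, h4]
  obtain ⟨b, c, d, hbc, hbd, hcd, habc⟩ := Finset.card_eq_three.mp h3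
  have hmem : ∀ z ∈ ((T.erase u).erase v).erase a, z ≠ a ∧ z ≠ v ∧ z ≠ u ∧ z ∈ T := by
    intro z hz
    have h1 := Finset.mem_erase.mp hz
    have h2 := Finset.mem_erase.mp h1.2
    have h3' := Finset.mem_erase.mp h2.2
    exact ⟨h1.1, h2.1, h3'.1, h3'.2⟩
  have hb : b ∈ ((T.erase u).erase v).erase a := by rw [habc]; simp
  have hc : c ∈ ((T.erase u).erase v).erase a := by rw [habc]; simp
  have hd : d ∈ ((T.erase u).erase v).erase a := by rw [habc]; simp
  obtain ⟨hba, hbv, hbu, hbT⟩ := hmem b hb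
  obtain ⟨hca, hcv, hcu, hcT⟩ := hmem c hc
  obtain ⟨hda, hdv, hdu, hdT⟩ := hmem d hd
  have h1 := Finset.mem_erase.mp ha
  have h2 := Finset.mem_erase.mp h1.2
  have hav := h1.1
  have hau := h2.1
  have haT := h2.2
  refine ⟨a, b, c, d, hba.symm, hca.symm, hda.symm, hbc, hbd, hcd,
    hau.symm, hbu.symm, hcu.symm, hdu.symm, hav.symm, hbv.symm, hcv.symm, hdv.symm, ?_⟩
  have hsub : ({u, v, a, b, c, d} : Finset V) ⊆ T := by
    intro z hz
    simp only [Finset.mem_insert, Finset.mem_singleton] at hz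
    rcases hz with rfl | rfl | rfl | rfl | rfl | rfl
    · exact hu
    · exact hv
    · exact haT
    · exact hbT
    · exact hcT
    · exact hdT
  have hcard : ({u, v, a, b, c, d} : Finset V).card = 6 := by
    rw [Finset.card_insert_of_notMem (by simp [huv, hau.symm, hbu.symm, hcu.symm, hdu.symm]),
      Finset.card_insert_of_notMem (by simp [hav.symm, hbv.symm, hcv.symm, hdv.symm]),
      Finset.card_insert_of_notMem
        (by simp [hba.symm, hca.symm, hda.symm]),
      Finset.card_insert_of_notMem (by simp [hbc, hbd]),
      Finset.card_insert_of_notMem (by simp [hcd]), Finset.card_singleton]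
  have hTeq : ({u, v, a, b, c, d} : Finset V) = T :=
    Finset.eq_of_subset_of_card_le hsub (by omega)
  rw [← hTeq]
  simp


theorem coreBool : ∀ (e02 e03 e04 e05 e12 e13 e14 e15 e23 e24 e25 e34 e35 e45 : Bool),
    e23 = true → e45 = true →
    (((!((!e02) && ((!e03) && ((!e04) && (!e05))))) && ((!((!e12) && ((!e13) && ((!e14) && (!e15))))) && ((!((!e02) && ((!e12) && ((!e24) && (!e25))))) && ((!((!e03) && ((!e13) && ((!e34) && (!e35))))) && ((!((!e04) && ((!e14) && ((!e24) && (!e34))))) && (!((!e05) && ((!e15) && ((!e25) && (!e35))))))))))) = true →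
    (((e02 && (e13 && e45)) || ((e02 && (e14 && e35)) || ((e02 && (e15 && e34)) || ((e03 && (e12 && e45)) || ((e03 && (e14 && e25)) || ((e03 && (e15 && e24)) || ((e04 && (e12 && e35)) || ((e04 && (e13 && e25)) || ((e04 && (e15 && e23)) || ((e05 && (e12 && e34)) || ((e05 && (e13 && e24)) || (e05 && (e14 && e23)))))))))))))) = false →
    (((((!e02) && ((!e03) && ((!e12) && ((!e13) && (!e23)))))) || ((((!e02) && ((!e04) && ((!e12) && ((!e14) && (!e24)))))) || ((((!e02) && ((!e05) && ((!e12) && ((!e15) && (!e25)))))) || ((((!e03) && ((!e04) && ((!e13) && ((!e14) && (!e34)))))) || ((((!e03) && ((!e05) && ((!e13) && ((!e15) && (!e35)))))) || ((((!e04) && ((!e05) && ((!e14) && ((!e15) && (!e45)))))) || ((((!e02) && ((!e12) && ((!e03) && ((!e13) && ((!e04) && (!e14))))))) || ((((!e02) && ((!e12) && ((!e03) && ((!e13) && ((!e05) && (!e15))))))) || ((((!e02) && ((!e12) && ((!e04) && ((!e14) && ((!e05) && (!e15))))))) || ((((!e03) && ((!e13) && ((!e04) && ((!e14) && ((!e05)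 && (!e15))))))) || ((((!e02) && ((!e03) && ((!e14) && ((!e15) && ((!e24) && ((!e25) && ((!e34) && (!e35))))))))) || ((((!e04) && ((!e05) && ((!e12) && ((!e13) && ((!e24) && ((!e34) && ((!e25) && (!e35))))))))) || ((((!e02) && ((!e04) && ((!e13) && ((!e15) && ((!e23) && ((!e25) && ((!e34) && (!e45))))))))) || ((((!e03) && ((!e05) && ((!e12) && ((!e14) && ((!e23) && ((!e34) && ((!e25) && (!e45))))))))) || ((((!e02) && ((!e05) && ((!e13) && ((!e14) && ((!e23) && ((!e24) && ((!e35) && (!e45))))))))) || ((((!e03) && ((!e04) && ((!e12) && ((!e15) && ((!e23) && ((!e35) && ((!e24) && (!e45))))))))) || ((((!e03) && ((!e04) && ((!e12) && ((!e15) && ((!e23) && ((!e35) && ((!e24) && (!e45))))))))) || ((((!e02) && ((!e05) && ((!e13) && ((!e14) && ((!e23) && ((!e24) && ((!e35) && (!e45))))))))) || ((((!e03) && ((!e05) && ((!e12) && ((!e14) && ((!e23) && ((!e34) && ((!e25) && (!e45))))))))) || ((((!e02) && ((!e04) && ((!e13) && ((!e15) && ((!e23) && ((!e25) && ((!e34)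 && (!e45))))))))) || ((((!e04) && ((!e05) && ((!e12) && ((!e13) && ((!e24) && ((!e34) && ((!e25) && (!e35))))))))) || (((!e02) && ((!e03) && ((!e14) && ((!e15) && ((!e24) && ((!e25) && ((!e34) && (!e35))))))))))))))))))))))))))))))) = true := by decide

set_option maxHeartbeats 2000000 in
lemma main6 [Fintype V] [DecidableEq V] {G : SimpleGraph V} [DecidableRel G.Adj]
    (hn8 : 8 ≤ Fintype.card V) (hdeg : ∀ w, Fintype.card V - 4 ≤ G.degree w)
    {A : Set V} {x0 x1 x2 x3 x4 x5 : V}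
    (n01 : x0 ≠ x1) (n02 : x0 ≠ x2) (n03 : x0 ≠ x3) (n04 : x0 ≠ x4) (n05 : x0 ≠ x5) (n12 : x1 ≠ x2) (n13 : x1 ≠ x3) (n14 : x1 ≠ x4) (n15 : x1 ≠ x5) (n23 : x2 ≠ x3) (n24 : x2 ≠ x4) (n25 : x2 ≠ x5) (n34 : x3 ≠ x4) (n35 : x3 ≠ x5) (n45 : x4 ≠ x5)
    (hA : A = {x0, x1, x2, x3, x4, x5})
    (h01 : G.Adj x0 x1) (h23 : G.Adj x2 x3) (h45 : G.Adj x4 x5)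
    (hnP : ¬ PBad G x0 x1) :
    HasPMOn (G.deleteEdges {s(x0, x1)}) A := by
  by_cases hav : (((G.Adj x0 x2 ∧ (G.Adj x1 x3 ∧ G.Adj x4 x5))) ∨ (((G.Adj x0 x2 ∧ (G.Adj x1 x4 ∧ G.Adj x3 x5))) ∨ (((G.Adj x0 x2 ∧ (G.Adj x1 x5 ∧ G.Adj x3 x4))) ∨ (((G.Adj x0 x3 ∧ (G.Adj x1 x2 ∧ G.Adj x4 x5))) ∨ (((G.Adj x0 x3 ∧ (G.Adj x1 x4 ∧ G.Adj x2 x5))) ∨ (((G.Adj x0 x3 ∧ (G.Adj x1 x5 ∧ G.Adj x2 x4))) ∨ (((G.Adj x0 x4 ∧ (G.Adj x1 x2 ∧ G.Adj x3 x5))) ∨ (((G.Adj x0 x4 ∧ (G.Adj x1 x3 ∧ G.Adj x2 x5))) ∨ (((G.Adj x0 x4 ∧ (G.Adj x1 x5 ∧ G.Adj x2 x3))) ∨ (((G.Adj x0 x5 ∧ (G.Adj x1 x2 ∧ G.Adj x3 x4))) ∨ (((G.Adj x0 x5 ∧ (G.Adj x1 x3 ∧ G.Adj x2 x4))) ∨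 ((G.Adj x0 x5 ∧ (G.Adj x1 x4 ∧ G.Adj x2 x3))))))))))))))
  · rcases hav with ⟨hc1, hc2, hc3⟩ | ⟨hc1, hc2, hc3⟩ | ⟨hc1, hc2, hc3⟩ | ⟨hc1, hc2, hc3⟩ | ⟨hc1, hc2, hc3⟩ | ⟨hc1, hc2, hc3⟩ | ⟨hc1, hc2, hc3⟩ | ⟨hc1, hc2, hc3⟩ | ⟨hc1, hc2, hc3⟩ | ⟨hc1, hc2, hc3⟩ | ⟨hc1, hc2, hc3⟩ | ⟨hc1, hc2, hc3⟩
    · exact buildPM (delAdj hc1 (fun hq => n12 hq.2.symm) (fun hq => n01 hq.1)) (delAdj hc2 (fun hq => n01 hq.1.symm) (fun hq => n03 hq.2.symm)) (delAdj hc3 (fun hq => n04 hq.1.symm) (fun hq => n14 hq.1.symm))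
        n01 n03 n04 n05 n12.symm n23 n24 n25 n14 n15 n34 n35
        (by rw [hA]; ext z; simp only [Set.mem_insert_iff, Set.mem_singleton_iff]; tauto)
    · exact buildPM (delAdj hc1 (fun hq => n12 hq.2.symm) (fun hq => n01 hq.1)) (delAdj hc2 (fun hq => n01 hq.1.symm) (fun hq => n04 hq.2.symm)) (delAdj hc3 (fun hq => n03 hq.1.symm) (fun hq => n13 hq.1.symm))
        n01 n04 n03 n05 n12.symm n24 n23 n25 n13 n15 n34.symm n45
        (by rw [hA]; ext z; simp only [Set.mem_insert_iff, Set.mem_singleton_iff]; tauto)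
    · exact buildPM (delAdj hc1 (fun hq => n12 hq.2.symm) (fun hq => n01 hq.1)) (delAdj hc2 (fun hq => n01 hq.1.symm) (fun hq => n05 hq.2.symm)) (delAdj hc3 (fun hq => n03 hq.1.symm) (fun hq => n13 hq.1.symm))
        n01 n05 n03 n04 n12.symm n25 n23 n24 n13 n14 n35.symm n45.symm
        (by rw [hA]; ext z; simp only [Set.mem_insert_iff, Set.mem_singleton_iff]; tauto)
    · exact buildPM (delAdj hc1 (fun hq => n13 hq.2.symm) (fun hq => n01 hq.1)) (delAdj hc2 (fun hq => n01 hq.1.symm) (fun hq => n02 hq.2.symm)) (delAdj hc3 (fun hq => n04 hq.1.symm) (fun hq => n14 hq.1.symm))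
        n01 n02 n04 n05 n13.symm n23.symm n34 n35 n14 n15 n24 n25
        (by rw [hA]; ext z; simp only [Set.mem_insert_iff, Set.mem_singleton_iff]; tauto)
    · exact buildPM (delAdj hc1 (fun hq => n13 hq.2.symm) (fun hq => n01 hq.1)) (delAdj hc2 (fun hq => n01 hq.1.symm) (fun hq => n04 hq.2.symm)) (delAdj hc3 (fun hq => n02 hq.1.symm) (fun hq => n12 hq.1.symm))
        n01 n04 n02 n05 n13.symm n34 n23.symm n35 n12 n15 n24.symm n45
        (by rw [hA]; ext z; simp only [Set.mem_insert_iff, Set.mem_singleton_iff]; tauto)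
    · exact buildPM (delAdj hc1 (fun hq => n13 hq.2.symm) (fun hq => n01 hq.1)) (delAdj hc2 (fun hq => n01 hq.1.symm) (fun hq => n05 hq.2.symm)) (delAdj hc3 (fun hq => n02 hq.1.symm) (fun hq => n12 hq.1.symm))
        n01 n05 n02 n04 n13.symm n35 n23.symm n34 n12 n14 n25.symm n45.symm
        (by rw [hA]; ext z; simp only [Set.mem_insert_iff, Set.mem_singleton_iff]; tauto)
    · exact buildPM (delAdj hc1 (fun hq => n14 hq.2.symm) (fun hq => n01 hq.1)) (delAdj hc2 (fun hq => n01 hq.1.symm) (fun hq => n02 hq.2.symm)) (delAdj hc3 (fun hq => n03 hq.1.symm) (fun hq => n13 hq.1.symm))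
        n01 n02 n03 n05 n14.symm n24.symm n34.symm n45 n13 n15 n23 n25
        (by rw [hA]; ext z; simp only [Set.mem_insert_iff, Set.mem_singleton_iff]; tauto)
    · exact buildPM (delAdj hc1 (fun hq => n14 hq.2.symm) (fun hq => n01 hq.1)) (delAdj hc2 (fun hq => n01 hq.1.symm) (fun hq => n03 hq.2.symm)) (delAdj hc3 (fun hq => n02 hq.1.symm) (fun hq => n12 hq.1.symm))
        n01 n03 n02 n05 n14.symm n34.symm n24.symm n45 n12 n15 n23.symm n35
        (by rw [hA]; ext z; simp only [Set.mem_insert_iff, Set.mem_singleton_iff]; tauto)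
    · exact buildPM (delAdj hc1 (fun hq => n14 hq.2.symm) (fun hq => n01 hq.1)) (delAdj hc2 (fun hq => n01 hq.1.symm) (fun hq => n05 hq.2.symm)) (delAdj hc3 (fun hq => n02 hq.1.symm) (fun hq => n12 hq.1.symm))
        n01 n05 n02 n03 n14.symm n45 n24.symm n34.symm n12 n13 n25.symm n35.symm
        (by rw [hA]; ext z; simp only [Set.mem_insert_iff, Set.mem_singleton_iff]; tauto)
    · exact buildPM (delAdj hc1 (fun hq => n15 hq.2.symm) (fun hq => n01 hq.1)) (delAdj hc2 (fun hq => n01 hq.1.symm) (fun hq => n02 hq.2.symm)) (delAdj hc3 (fun hq => n03 hq.1.symm) (fun hq => n13 hq.1.symm))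
        n01 n02 n03 n04 n15.symm n25.symm n35.symm n45.symm n13 n14 n23 n24
        (by rw [hA]; ext z; simp only [Set.mem_insert_iff, Set.mem_singleton_iff]; tauto)
    · exact buildPM (delAdj hc1 (fun hq => n15 hq.2.symm) (fun hq => n01 hq.1)) (delAdj hc2 (fun hq => n01 hq.1.symm) (fun hq => n03 hq.2.symm)) (delAdj hc3 (fun hq => n02 hq.1.symm) (fun hq => n12 hq.1.symm))
        n01 n03 n02 n04 n15.symm n35.symm n25.symm n45.symm n12 n14 n23.symm n34
        (by rw [hA]; ext z; simp only [Set.mem_insert_iff, Set.mem_singleton_iff]; tauto)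
    · exact buildPM (delAdj hc1 (fun hq => n15 hq.2.symm) (fun hq => n01 hq.1)) (delAdj hc2 (fun hq => n01 hq.1.symm) (fun hq => n04 hq.2.symm)) (delAdj hc3 (fun hq => n02 hq.1.symm) (fun hq => n12 hq.1.symm))
        n01 n04 n02 n03 n15.symm n45.symm n25.symm n35.symm n12 n13 n24.symm n34.symm
        (by rw [hA]; ext z; simp only [Set.mem_insert_iff, Set.mem_singleton_iff]; tauto)
  · exfalso
    have hbool := coreBool (decide (G.Adj x0 x2)) (decide (G.Adj x0 x3)) (decide (G.Adj x0 x4)) (decide (G.Adj x0 x5)) (decide (G.Adj x1 x2)) (decide (G.Adj x1 x3)) (decide (G.Adj x1 x4)) (decide (G.Adj x1 x5)) (decide (G.Adj x2 x3)) (decide (G.Adj x2 x4)) (decide (G.Adj x2 x5)) (decide (G.Adj x3 x4)) (decide (G.Adj x3 x5)) (decide (G.Adj x4 x5))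
      (decide_eq_true h23) (decide_eq_true h45)
      (by simp only [← decide_not, ← Bool.decide_and, decide_eq_true_eq]
          exact ⟨
      (fun h => H4 hn8 hdeg n23 n24 n25 n34 n35 n45 ⟨n02, h.1⟩ ⟨n03, h.2.1⟩ ⟨n04, h.2.2.1⟩ ⟨n05, h.2.2.2⟩),
      (fun h => H4 hn8 hdeg n23 n24 n25 n34 n35 n45 ⟨n12, h.1⟩ ⟨n13, h.2.1⟩ ⟨n14, h.2.2.1⟩ ⟨n15, h.2.2.2⟩),
      (fun h => H4 hn8 hdeg n01 n04 n05 n14 n15 n45 ⟨n02.symm, fun hh => h.1 hh.symm⟩ ⟨n12.symm, fun hh => h.2.1 hh.symm⟩ ⟨n24, h.2.2.1⟩ ⟨n25, h.2.2.2⟩),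
      (fun h => H4 hn8 hdeg n01 n04 n05 n14 n15 n45 ⟨n03.symm, fun hh => h.1 hh.symm⟩ ⟨n13.symm, fun hh => h.2.1 hh.symm⟩ ⟨n34, h.2.2.1⟩ ⟨n35, h.2.2.2⟩),
      (fun h => H4 hn8 hdeg n01 n02 n03 n12 n13 n23 ⟨n04.symm, fun hh => h.1 hh.symm⟩ ⟨n14.symm, fun hh => h.2.1 hh.symm⟩ ⟨n24.symm, fun hh => h.2.2.1 hh.symm⟩ ⟨n34.symm, fun hh => h.2.2.2 hh.symm⟩),
      (fun h => H4 hn8 hdeg n01 n02 n03 n12 n13 n23 ⟨n05.symm, fun hh => h.1 hh.symm⟩ ⟨n15.symm, fun hh => h.2.1 hh.symm⟩ ⟨n25.symm, fun hh => h.2.2.1 hh.symm⟩ ⟨n35.symm, fun hh => h.2.2.2 hh.symm⟩)⟩)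
      (by simp only [← Bool.decide_and, ← Bool.decide_or]
          exact decide_eq_false hav)
    simp only [Bool.or_eq_true, Bool.and_eq_true, Bool.not_eq_true', decide_eq_false_iff_not] at hbool
    rcases hbool with ⟨hc1, hc2, hc3, hc4, hc5⟩ | ⟨hc1, hc2, hc3, hc4, hc5⟩ | ⟨hc1, hc2, hc3, hc4, hc5⟩ | ⟨hc1, hc2, hc3, hc4, hc5⟩ | ⟨hc1, hc2, hc3, hc4, hc5⟩ | ⟨hc1, hc2, hc3, hc4, hc5⟩ | ⟨hc1, hc2, hc3, hc4, hc5, hc6⟩ | ⟨hc1, hc2, hc3, hc4, hc5, hc6⟩ | ⟨hc1, hc2, hc3, hc4, hc5, hc6⟩ | ⟨hc1, hc2, hc3, hc4, hc5, hc6⟩ | ⟨hc1, hc2, hc3, hc4, hc5, hc6, hc7, hc8⟩ | ⟨hc1, hc2, hc3, hc4, hc5, hc6, hc7, hc8⟩ | ⟨hc1, hc2, hc3, hc4, hc5, hc6, hc7, hc8⟩ | ⟨hc1, hc2, hc3, hc4, hc5, hc6, hc7, hc8⟩ | ⟨hc1, hc2, hc3, hc4, hc5, hc6, hc7, hc8⟩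 | ⟨hc1, hc2, hc3, hc4, hc5, hc6, hc7, hc8⟩ | ⟨hc1, hc2, hc3, hc4, hc5, hc6, hc7, hc8⟩ | ⟨hc1, hc2, hc3, hc4, hc5, hc6, hc7, hc8⟩ | ⟨hc1, hc2, hc3, hc4, hc5, hc6, hc7, hc8⟩ | ⟨hc1, hc2, hc3, hc4, hc5, hc6, hc7, hc8⟩ | ⟨hc1, hc2, hc3, hc4, hc5, hc6, hc7, hc8⟩ | ⟨hc1, hc2, hc3, hc4, hc5, hc6, hc7, hc8⟩
    · exact hnP (Or.inl ⟨x2, x3, n23, ⟨n02, hc1⟩, ⟨n03, hc2⟩, ⟨n12, hc3⟩, ⟨n13, hc4⟩, ⟨n23, hc5⟩⟩)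
    · exact hnP (Or.inl ⟨x2, x4, n24, ⟨n02, hc1⟩, ⟨n04, hc2⟩, ⟨n12, hc3⟩, ⟨n14, hc4⟩, ⟨n24, hc5⟩⟩)
    · exact hnP (Or.inl ⟨x2, x5, n25, ⟨n02, hc1⟩, ⟨n05, hc2⟩, ⟨n12, hc3⟩, ⟨n15, hc4⟩, ⟨n25, hc5⟩⟩)
    · exact hnP (Or.inl ⟨x3, x4, n34, ⟨n03, hc1⟩, ⟨n04, hc2⟩, ⟨n13, hc3⟩, ⟨n14, hc4⟩, ⟨n34, hc5⟩⟩)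
    · exact hnP (Or.inl ⟨x3, x5, n35, ⟨n03, hc1⟩, ⟨n05, hc2⟩, ⟨n13, hc3⟩, ⟨n15, hc4⟩, ⟨n35, hc5⟩⟩)
    · exact hnP (Or.inl ⟨x4, x5, n45, ⟨n04, hc1⟩, ⟨n05, hc2⟩, ⟨n14, hc3⟩, ⟨n15, hc4⟩, ⟨n45, hc5⟩⟩)
    · exact hnP (Or.inr (Or.inl ⟨x2, x3, x4, n23, n24, n34, ⟨n02, hc1⟩, ⟨n03, hc3⟩, ⟨n04, hc5⟩, ⟨n12, hc2⟩, ⟨n13, hc4⟩, ⟨n14, hc6⟩⟩))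
    · exact hnP (Or.inr (Or.inl ⟨x2, x3, x5, n23, n25, n35, ⟨n02, hc1⟩, ⟨n03, hc3⟩, ⟨n05, hc5⟩, ⟨n12, hc2⟩, ⟨n13, hc4⟩, ⟨n15, hc6⟩⟩))
    · exact hnP (Or.inr (Or.inl ⟨x2, x4, x5, n24, n25, n45, ⟨n02, hc1⟩, ⟨n04, hc3⟩, ⟨n05, hc5⟩, ⟨n12, hc2⟩, ⟨n14, hc4⟩, ⟨n15, hc6⟩⟩))
    · exact hnP (Or.inr (Or.inl ⟨x3, x4, x5, n34, n35, n45, ⟨n03, hc1⟩, ⟨n04, hc3⟩, ⟨n05, hc5⟩, ⟨n13, hc2⟩, ⟨n14, hc4⟩, ⟨n15, hc6⟩⟩))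
    · exact hnP (Or.inr (Or.inr ⟨x2, x3, x4, x5, n23, n24, n25, n34, n35, n45, ⟨n02, hc1⟩, ⟨n03, hc2⟩, ⟨n14, hc3⟩, ⟨n15, hc4⟩, ⟨n24, hc5⟩, ⟨n25, hc6⟩, ⟨n34, hc7⟩, ⟨n35, hc8⟩⟩))
    · exact hnP (Or.inr (Or.inr ⟨x4, x5, x2, x3, n45, n24.symm, n34.symm, n25.symm, n35.symm, n23, ⟨n04, hc1⟩, ⟨n05, hc2⟩, ⟨n12, hc3⟩, ⟨n13, hc4⟩, ⟨n24.symm, fun hh => hc5 hh.symm⟩, ⟨n34.symm, fun hh => hc6 hh.symm⟩, ⟨n25.symm, fun hh => hc7 hh.symm⟩, ⟨n35.symm, fun hh => hc8 hh.symm⟩⟩))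
    · exact hnP (Or.inr (Or.inr ⟨x2, x4, x3, x5, n24, n23, n25, n34.symm, n45, n35, ⟨n02, hc1⟩, ⟨n04, hc2⟩, ⟨n13, hc3⟩, ⟨n15, hc4⟩, ⟨n23, hc5⟩, ⟨n25, hc6⟩, ⟨n34.symm, fun hh => hc7 hh.symm⟩, ⟨n45, hc8⟩⟩))
    · exact hnP (Or.inr (Or.inr ⟨x3, x5, x2, x4, n35, n23.symm, n34, n25.symm, n45.symm, n24, ⟨n03, hc1⟩, ⟨n05, hc2⟩, ⟨n12, hc3⟩, ⟨n14, hc4⟩, ⟨n23.symm, fun hh => hc5 hh.symm⟩, ⟨n34, hc6⟩, ⟨n25.symm, fun hh => hc7 hh.symm⟩, ⟨n45.symm, fun hh => hc8 hh.symm⟩⟩))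
    · exact hnP (Or.inr (Or.inr ⟨x2, x5, x3, x4, n25, n23, n24, n35.symm, n45.symm, n34, ⟨n02, hc1⟩, ⟨n05, hc2⟩, ⟨n13, hc3⟩, ⟨n14, hc4⟩, ⟨n23, hc5⟩, ⟨n24, hc6⟩, ⟨n35.symm, fun hh => hc7 hh.symm⟩, ⟨n45.symm, fun hh => hc8 hh.symm⟩⟩))
    · exact hnP (Or.inr (Or.inr ⟨x3, x4, x2, x5, n34, n23.symm, n35, n24.symm, n45, n25, ⟨n03, hc1⟩, ⟨n04, hc2⟩, ⟨n12, hc3⟩, ⟨n15, hc4⟩, ⟨n23.symm, fun hh => hc5 hh.symm⟩, ⟨n35, hc6⟩, ⟨n24.symm, fun hh => hc7 hh.symm⟩, ⟨n45, hc8⟩⟩))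
    · exact hnP (Or.inr (Or.inr ⟨x3, x4, x2, x5, n34, n23.symm, n35, n24.symm, n45, n25, ⟨n03, hc1⟩, ⟨n04, hc2⟩, ⟨n12, hc3⟩, ⟨n15, hc4⟩, ⟨n23.symm, fun hh => hc5 hh.symm⟩, ⟨n35, hc6⟩, ⟨n24.symm, fun hh => hc7 hh.symm⟩, ⟨n45, hc8⟩⟩))
    · exact hnP (Or.inr (Or.inr ⟨x2, x5, x3, x4, n25, n23, n24, n35.symm, n45.symm, n34, ⟨n02, hc1⟩, ⟨n05, hc2⟩, ⟨n13, hc3⟩, ⟨n14, hc4⟩, ⟨n23, hc5⟩, ⟨n24, hc6⟩, ⟨n35.symm, fun hh => hc7 hh.symm⟩, ⟨n45.symm, fun hh => hc8 hh.symm⟩⟩))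
    · exact hnP (Or.inr (Or.inr ⟨x3, x5, x2, x4, n35, n23.symm, n34, n25.symm, n45.symm, n24, ⟨n03, hc1⟩, ⟨n05, hc2⟩, ⟨n12, hc3⟩, ⟨n14, hc4⟩, ⟨n23.symm, fun hh => hc5 hh.symm⟩, ⟨n34, hc6⟩, ⟨n25.symm, fun hh => hc7 hh.symm⟩, ⟨n45.symm, fun hh => hc8 hh.symm⟩⟩))
    · exact hnP (Or.inr (Or.inr ⟨x2, x4, x3, x5, n24, n23, n25, n34.symm, n45, n35, ⟨n02, hc1⟩, ⟨n04, hc2⟩, ⟨n13, hc3⟩, ⟨n15, hc4⟩, ⟨n23, hc5⟩, ⟨n25, hc6⟩, ⟨n34.symm, fun hh => hc7 hh.symm⟩, ⟨n45, hc8⟩⟩))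
    · exact hnP (Or.inr (Or.inr ⟨x4, x5, x2, x3, n45, n24.symm, n34.symm, n25.symm, n35.symm, n23, ⟨n04, hc1⟩, ⟨n05, hc2⟩, ⟨n12, hc3⟩, ⟨n13, hc4⟩, ⟨n24.symm, fun hh => hc5 hh.symm⟩, ⟨n34.symm, fun hh => hc6 hh.symm⟩, ⟨n25.symm, fun hh => hc7 hh.symm⟩, ⟨n35.symm, fun hh => hc8 hh.symm⟩⟩))
    · exact hnP (Or.inr (Or.inr ⟨x2, x3, x4, x5, n23, n24, n25, n34, n35, n45, ⟨n02, hc1⟩, ⟨n03, hc2⟩, ⟨n14, hc3⟩, ⟨n15, hc4⟩, ⟨n24, hc5⟩, ⟨n25, hc6⟩, ⟨n34, hc7⟩, ⟨n35, hc8⟩⟩))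


section DEL
variable [Fintype V] [DecidableEq V] {G : SimpleGraph V} [DecidableRel G.Adj]

set_option maxHeartbeats 1000000 in
lemma DEL (hn8 : 8 ≤ Fintype.card V) (hdeg : ∀ w, Fintype.card V - 4 ≤ G.degree w)
    (hfc : FactorCritical G (Fintype.card V - 6)) {u v : V} (hadj : G.Adj u v)
    (hnP : ¬ PBad G u v) :
    FactorCritical (G.deleteEdges {s(u,v)}) (Fintype.card V - 6) := by
  intro S hS
  obtain ⟨M, hMv, hMm⟩ := hfc S hS
  by_cases huvM : M.Adj u v
  case neg => exact transferPM M hMv hMm huvM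
  have hu : u ∈ M.verts := M.edge_vert huvM
  have hv : v ∈ M.verts := M.edge_vert huvM.symm
  have hT6 : (Sᶜ : Finset V).card = 6 := by
    rw [Finset.card_compl, hS]
    omega
  have hcoe : ((↑S : Set V))ᶜ = ↑(Sᶜ : Finset V) := by simp [Finset.coe_compl]
  have huT : u ∈ (Sᶜ : Finset V) := by
    rw [hMv, hcoe] at hu
    exact_mod_cast hu
  have hvT : v ∈ (Sᶜ : Finset V) := by
    rw [hMv, hcoe] at hv
    exact_mod_cast hv
  obtain ⟨a, b, c, d, hab, hac, had, hbc, hbd, hcd, hua, hub, huc, hud,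
    hva, hvb, hvc, hvd, hset⟩ := six_decomp hT6 huT hvT (G.ne_of_adj hadj)
  have hA : ((↑S : Set V))ᶜ = {u, v, a, b, c, d} := hcoe.trans hset
  have hverts : M.verts = {u, v, a, b, c, d} := by rw [hMv, hA]
  have haM : a ∈ M.verts := by rw [hverts]; right; right; left; rfl
  have hbM : b ∈ M.verts := by rw [hverts]; right; right; right; left; rfl
  have hcM : c ∈ M.verts := by rw [hverts]; right; right; right; right; left; rfl
  have hdM : d ∈ M.verts := by rw [hverts]; right; right; right; right; right; rfl
  obtain ⟨qa, hqa, -⟩ := hMm haM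
  have hqau : qa ≠ u := by
    rintro rfl
    exact hva ((hMm hu).unique hqa.symm huvM).symm
  have hqav : qa ≠ v := by
    rintro rfl
    exact hua ((hMm hv).unique hqa.symm huvM.symm).symm
  have hqaa : qa ≠ a := fun h => G.loopless.irrefl a ((h ▸ hqa).adj_sub)
  have hqamem : qa ∈ M.verts := M.edge_vert hqa.symm
  rw [hverts] at hqamem
  have hqa6 : qa = u ∨ qa = v ∨ qa = a ∨ qa = b ∨ qa = c ∨ qa = d := by
    simpa using hqamem
  rcases hqa6 with h | h | h | hqb | hqc | hqd
  · exact absurd h hqau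
  · exact absurd h hqav
  · exact absurd h hqaa
  · -- pairs (a,b),(c,d)
    rw [hqb] at hqa
    obtain ⟨p, hp, -⟩ := hMm hcM
    have hpu : p ≠ u := by
      rintro rfl
      exact hvc ((hMm hu).unique hp.symm huvM).symm
    have hpv : p ≠ v := by
      rintro rfl
      exact huc ((hMm hv).unique hp.symm huvM.symm).symm
    have hpc : p ≠ c := fun h => G.loopless.irrefl c ((h ▸ hp).adj_sub)
    have hpa : p ≠ a := by
      rintro rfl
      exact hbc ((hMm haM).unique hqa hp.symm)
    have hpb : p ≠ b := by
      rintro rfl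
      exact hac ((hMm hbM).unique hqa.symm hp.symm)
    have hpmem : p ∈ M.verts := M.edge_vert hp.symm
    rw [hverts] at hpmem
    have hp6 : p = u ∨ p = v ∨ p = a ∨ p = b ∨ p = c ∨ p = d := by simpa using hpmem
    rcases hp6 with h | h | h | h | h | hpd
    · exact absurd h hpu
    · exact absurd h hpv
    · exact absurd h hpa
    · exact absurd h hpb
    · exact absurd h hpc
    · rw [hpd] at hp
      exact main6 hn8 hdeg (G.ne_of_adj hadj) hua hub huc hud hva hvb hvc hvd
        hab hac had hbc hbd hcd hA hadj (hqa.adj_sub) (hp.adj_sub) hnP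
  · -- pairs (a,c),(b,d)
    rw [hqc] at hqa
    obtain ⟨p, hp, -⟩ := hMm hbM
    have hpu : p ≠ u := by
      rintro rfl
      exact hvb ((hMm hu).unique hp.symm huvM).symm
    have hpv : p ≠ v := by
      rintro rfl
      exact hub ((hMm hv).unique hp.symm huvM.symm).symm
    have hpb : p ≠ b := fun h => G.loopless.irrefl b ((h ▸ hp).adj_sub)
    have hpa : p ≠ a := by
      rintro rfl
      exact hbc ((hMm haM).unique hqa hp.symm).symm
    have hpc : p ≠ c := by
      rintro rfl
      exact hab ((hMm hcM).unique hqa.symm hp.symm)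
    have hpmem : p ∈ M.verts := M.edge_vert hp.symm
    rw [hverts] at hpmem
    have hp6 : p = u ∨ p = v ∨ p = a ∨ p = b ∨ p = c ∨ p = d := by simpa using hpmem
    rcases hp6 with h | h | h | h | h | hpd
    · exact absurd h hpu
    · exact absurd h hpv
    · exact absurd h hpa
    · exact absurd h hpb
    · exact absurd h hpc
    · rw [hpd] at hp
      exact main6 hn8 hdeg (G.ne_of_adj hadj) hua huc hub hud hva hvc hvb hvd
        hac hab had hbc.symm hcd hbd
        (by rw [hA]; ext z; simp only [Set.mem_insert_iff, Set.mem_singleton_iff]; tauto)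
        hadj (hqa.adj_sub) (hp.adj_sub) hnP
  · -- pairs (a,d),(b,c)
    rw [hqd] at hqa
    obtain ⟨p, hp, -⟩ := hMm hbM
    have hpu : p ≠ u := by
      rintro rfl
      exact hvb ((hMm hu).unique hp.symm huvM).symm
    have hpv : p ≠ v := by
      rintro rfl
      exact hub ((hMm hv).unique hp.symm huvM.symm).symm
    have hpb : p ≠ b := fun h => G.loopless.irrefl b ((h ▸ hp).adj_sub)
    have hpa : p ≠ a := by
      rintro rfl
      exact hbd ((hMm haM).unique hqa hp.symm).symm
    have hpd : p ≠ d := by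
      rintro rfl
      exact hab ((hMm hdM).unique hqa.symm hp.symm)
    have hpmem : p ∈ M.verts := M.edge_vert hp.symm
    rw [hverts] at hpmem
    have hp6 : p = u ∨ p = v ∨ p = a ∨ p = b ∨ p = c ∨ p = d := by simpa using hpmem
    rcases hp6 with h | h | h | h | hpc | h
    · exact absurd h hpu
    · exact absurd h hpv
    · exact absurd h hpa
    · exact absurd h hpb
    · rw [hpc] at hp
      exact main6 hn8 hdeg (G.ne_of_adj hadj) hua hud hub huc hva hvd hvb hvc
        had hab hac hbd.symm hcd.symm hbc
        (by rw [hA]; ext z; simp only [Set.mem_insert_iff, Set.mem_singleton_iff]; tauto)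
        hadj (hqa.adj_sub) (hp.adj_sub) hnP
    · exact absurd h hpd
end DEL

end MFC

theorem minFactorCritical_n_sub_six_minDegree [Fintype V] (G : SimpleGraph V)
    [DecidableRel G.Adj] (n : ℕ) (hn : Fintype.card V = n) (h8 : 8 ≤ n)
    (hG : MinFactorCritical G (n - 6)) :
    G.minDegree = n - 5 := by
  classical
  subst hn
  have hn8 : 8 ≤ Fintype.card V := h8
  haveI hne : Nonempty V := Fintype.card_pos_iff.mp (by omega)
  have hlow : ∀ v : V, Fintype.card V - 5 ≤ G.degree v := fun v =>
    MFC.degree_lower hn8 hG.1 v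
  refine le_antisymm ?_ (G.le_minDegree_of_forall_le_degree _ hlow)
  by_cases hd : ∀ w, Fintype.card V - 4 ≤ G.degree w
  · exfalso
    obtain ⟨u⟩ := hne
    have hdu : 3 ≤ (G.neighborFinset u).card := by
      have h1 := hd u
      have h2 : G.degree u = (G.neighborFinset u).card := rfl
      omega
    obtain ⟨t3, ht3sub, ht3⟩ := Finset.exists_subset_card_eq hdu
    obtain ⟨v1, v2, v3, h12, h13, h23, ht3eq⟩ := Finset.card_eq_three.mp ht3
    have hv1 : G.Adj u v1 := by
      have h := ht3sub (by rw [ht3eq]; simp : v1 ∈ t3)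
      rwa [SimpleGraph.mem_neighborFinset] at h
    have hv2 : G.Adj u v2 := by
      have h := ht3sub (by rw [ht3eq]; simp : v2 ∈ t3)
      rwa [SimpleGraph.mem_neighborFinset] at h
    have hv3 : G.Adj u v3 := by
      have h := ht3sub (by rw [ht3eq]; simp : v3 ∈ t3)
      rwa [SimpleGraph.mem_neighborFinset] at h
    by_cases hex : ∃ w, G.Adj u w ∧ ¬ MFC.PBad G u w
    · obtain ⟨w, hw, hnp⟩ := hex
      exact hG.2 u w hw (MFC.DEL hn8 hd hG.1 hw hnp)
    · push_neg at hex
      exact MFC.CNT (fun {x a b c d} => MFC.H4 hn8 hd) (fun {x a b c z} => MFC.H3 hn8 hd)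
        h12 h13 h23 hv1 hv2 hv3 (hex v1 hv1) (hex v2 hv2) (hex v3 hv3)
  · push_neg at hd
    obtain ⟨w, hw⟩ := hd
    have hmle := G.minDegree_le_degree w
    omega
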